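/- Let n ≥ 2 and let X₁, …, X_n be independent Geometric(1/2) random variables on ℕ. Let s_max = max_{1 ≤ v ≤ n} X_v. Then for every i with 2 ≤ i ≤ n, the probability that exactly i of the variables attain the maximum is at most 2^{1−i}; that is, Pr(|{v : X_v = s_max}| = i) ≤ 2^{1−i}. -/

import Mathlib

open MeasureTheory ProbabilityTheory Finset
open scoped ENNReal

set_option linter.unusedSectionVars false

section GeoAux

variable {Ω : Type*} [MeasurableSpace Ω] {n : ℕ} (X : Fin n → Ω → ℕ)

/-- all coordinates in `S` equal `j`, all outside `< j` -/
def geoD (j : ℕ) (S : Finset (Fin n)) : Set Ω :=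
  ⋂ v, X v ⁻¹' (if v ∈ S then {j} else Set.Iio j)

/-- all coordinates in `S` are `≥ j+1`, all outside `< j` -/
def geoG (j : ℕ) (S : Finset (Fin n)) : Set Ω :=
  ⋂ v, X v ⁻¹' (if v ∈ S then Set.Ici (j+1) else Set.Iio j)

/-- all coordinates in `S` are `≥ j`, all outside `< j` -/
def geoH (j : ℕ) (S : Finset (Fin n)) : Set Ω :=
  ⋂ v, X v ⁻¹' (if v ∈ S then Set.Ici j else Set.Iio j)

def geoF (j : ℕ) (S : Finset (Fin n)) : Set Ω := geoH X j S \ geoG X j S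

lemma mem_geoD {j : ℕ} {S : Finset (Fin n)} {ω : Ω} :
    ω ∈ geoD X j S ↔ (∀ v ∈ S, X v ω = j) ∧ ∀ v ∉ S, X v ω < j := by
  simp only [geoD, Set.mem_iInter, Set.mem_preimage]
  constructor
  · intro h
    refine ⟨fun v hv => ?_, fun v hv => ?_⟩
    · have := h v; rw [if_pos hv] at this; simpa using this
    · have := h v; rw [if_neg hv] at this; simpa using this
  · rintro ⟨h1, h2⟩ v
    by_cases hv : v ∈ S
    · rw [if_pos hv]; simpa using h1 v hv
    · rw [if_neg hv]; simpa using h2 v hv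

lemma mem_geoG {j : ℕ} {S : Finset (Fin n)} {ω : Ω} :
    ω ∈ geoG X j S ↔ (∀ v ∈ S, j + 1 ≤ X v ω) ∧ ∀ v ∉ S, X v ω < j := by
  simp only [geoG, Set.mem_iInter, Set.mem_preimage]
  constructor
  · intro h
    refine ⟨fun v hv => ?_, fun v hv => ?_⟩
    · have := h v; rw [if_pos hv] at this; simpa using this
    · have := h v; rw [if_neg hv] at this; simpa using this
  · rintro ⟨h1, h2⟩ v
    by_cases hv : v ∈ S
    · rw [if_pos hv]; simpa using h1 v hv
    · rw [if_neg hv]; simpa using h2 v hv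

lemma mem_geoH {j : ℕ} {S : Finset (Fin n)} {ω : Ω} :
    ω ∈ geoH X j S ↔ (∀ v ∈ S, j ≤ X v ω) ∧ ∀ v ∉ S, X v ω < j := by
  simp only [geoH, Set.mem_iInter, Set.mem_preimage]
  constructor
  · intro h
    refine ⟨fun v hv => ?_, fun v hv => ?_⟩
    · have := h v; rw [if_pos hv] at this; simpa using this
    · have := h v; rw [if_neg hv] at this; simpa using this
  · rintro ⟨h1, h2⟩ v
    by_cases hv : v ∈ S
    · rw [if_pos hv]; simpa using h1 v hv
    · rw [if_neg hv]; simpa using h2 v hv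

lemma mem_geoF {j : ℕ} {S : Finset (Fin n)} {ω : Ω} (h : ω ∈ geoF X j S) :
    ((∀ v ∈ S, j ≤ X v ω) ∧ ∀ v ∉ S, X v ω < j) ∧ ∃ v ∈ S, X v ω = j := by
  obtain ⟨hH, hnG⟩ := h
  rw [mem_geoH] at hH
  refine ⟨hH, ?_⟩
  have hA : ¬ ∀ v ∈ S, j + 1 ≤ X v ω := fun hA => hnG (mem_geoG X |>.2 ⟨hA, hH.2⟩)
  push_neg at hA
  obtain ⟨v, hvS, hvlt⟩ := hA
  exact ⟨v, hvS, le_antisymm (by omega) (hH.1 v hvS)⟩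

lemma geoD_eq_of_mem {j k : ℕ} {S T : Finset (Fin n)} {ω : Ω}
    (hS : 0 < S.card) (hT : 0 < T.card)
    (h1 : ω ∈ geoD X j S) (h2 : ω ∈ geoD X k T) : j = k ∧ S = T := by
  rw [mem_geoD] at h1 h2
  obtain ⟨v0, hv0⟩ := card_pos.1 hS
  obtain ⟨v1, hv1⟩ := card_pos.1 hT
  have hjk : j = k := by
    have ha : j = k ∨ j < k := by
      by_cases hv : v0 ∈ T
      · exact Or.inl ((h1.1 v0 hv0).symm.trans (h2.1 v0 hv))
      · have := h2.2 v0 hv; have := h1.1 v0 hv0; omega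
    have hb : k = j ∨ k < j := by
      by_cases hv : v1 ∈ S
      · exact Or.inl ((h2.1 v1 hv1).symm.trans (h1.1 v1 hv))
      · have := h1.2 v1 hv; have := h2.1 v1 hv1; omega
    omega
  subst hjk
  refine ⟨rfl, Finset.ext fun v => ?_⟩
  constructor
  · intro hv
    by_contra hvT
    have := h2.2 v hvT; have := h1.1 v hv; omega
  · intro hv
    by_contra hvS
    have := h1.2 v hvS; have := h2.1 v hv; omega

lemma geoF_disj_lt {i j k : ℕ} (hjk : j < k) {S T : Finset (Fin n)}
    (hS : S.card = i) (hT : T.card = i) {ω : Ω}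
    (h1 : ω ∈ geoF X j S) (h2 : ω ∈ geoF X k T) : False := by
  obtain ⟨⟨h1a, h1b⟩, v0, hv0S, hv0⟩ := mem_geoF X h1
  obtain ⟨⟨h2a, h2b⟩, -⟩ := mem_geoF X h2
  have hTsub : T ⊆ S.erase v0 := by
    intro v hvT
    have hkv : k ≤ X v ω := h2a v hvT
    have hvS : v ∈ S := by
      by_contra hvS
      have := h1b v hvS; omega
    refine Finset.mem_erase.2 ⟨?_, hvS⟩
    rintro rfl; omega
  have hc1 := Finset.card_le_card hTsub
  have hc2 := Finset.card_erase_of_mem hv0S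
  have : 0 < S.card := by
    rw [Finset.card_pos]; exact ⟨v0, hv0S⟩
  omega

lemma geoF_eq_of_mem {j : ℕ} {S T : Finset (Fin n)} {ω : Ω}
    (h1 : ω ∈ geoF X j S) (h2 : ω ∈ geoF X j T) : S = T := by
  obtain ⟨⟨h1a, h1b⟩, -⟩ := mem_geoF X h1
  obtain ⟨⟨h2a, h2b⟩, -⟩ := mem_geoF X h2
  refine Finset.ext fun v => ⟨fun hv => ?_, fun hv => ?_⟩
  · by_contra hvT
    have := h2b v hvT; have := h1a v hv; omega
  · by_contra hvS
    have := h1b v hvS; have := h2a v hv; omega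

end GeoAux

section GeoMeas

variable {Ω : Type*} [MeasurableSpace Ω] (μ : Measure Ω) [IsProbabilityMeasure μ]
  {n : ℕ} (X : Fin n → Ω → ℕ)

lemma geo_tail (hmeas : ∀ v, Measurable (X v))
    (hgeom : ∀ (v : Fin n) (j : ℕ), μ {ω | X v ω = j} = (2 : ℝ≥0∞)⁻¹ ^ (j + 1))
    (v : Fin n) (k : ℕ) : μ {ω | k ≤ X v ω} = 2⁻¹ ^ k := by
  induction k with
  | zero => simp
  | succ k ih =>
    have hsplit : {ω | k ≤ X v ω} = {ω | X v ω = k} ∪ {ω | k + 1 ≤ X v ω} := by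
      ext ω; simp only [Set.mem_setOf_eq, Set.mem_union]; omega
    have hdisj : Disjoint {ω | X v ω = k} {ω | k + 1 ≤ X v ω} := by
      rw [Set.disjoint_left]; intro ω h1 h2
      simp only [Set.mem_setOf_eq] at h1 h2; omega
    have hm : MeasurableSet {ω | k + 1 ≤ X v ω} := (hmeas v) .of_discrete
    have hU := measure_union (μ := μ) hdisj hm
    rw [← hsplit, ih, hgeom] at hU
    have h2 : (2:ℝ≥0∞)⁻¹ ^ k = 2⁻¹ ^ (k+1) + 2⁻¹ ^ (k+1) := by
      rw [pow_succ, ← mul_add]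
      have : (2:ℝ≥0∞)⁻¹ + 2⁻¹ = 1 := by
        rw [← two_mul, ENNReal.mul_inv_cancel two_ne_zero ENNReal.ofNat_ne_top]
      rw [this, mul_one]
    rw [h2] at hU
    exact (ENNReal.add_right_inj (by simp [ENNReal.pow_ne_top])).mp hU.symm

lemma geo_lt (hmeas : ∀ v, Measurable (X v))
    (hgeom : ∀ (v : Fin n) (j : ℕ), μ {ω | X v ω = j} = (2 : ℝ≥0∞)⁻¹ ^ (j + 1))
    (v : Fin n) (k : ℕ) : μ {ω | X v ω < k} = 1 - 2⁻¹ ^ k := by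
  have hc : {ω | X v ω < k} = {ω | k ≤ X v ω}ᶜ := by
    ext ω; simp only [Set.mem_setOf_eq, Set.mem_compl_iff, not_le]
  have hm : MeasurableSet {ω | k ≤ X v ω} := (hmeas v) .of_discrete
  rw [hc, prob_compl_eq_one_sub hm, geo_tail μ X hmeas hgeom]

lemma geo_prod (hindep : iIndepFun X μ) (B : Fin n → Set ℕ) :
    μ (⋂ v, X v ⁻¹' B v) = ∏ v, μ (X v ⁻¹' B v) := by
  have := hindep.measure_inter_preimage_eq_mul (sets := B) Finset.univ
    (fun v _ => .of_discrete)
  simpa using this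

lemma ite_prod (a b : ℝ≥0∞) (S : Finset (Fin n)) :
    ∏ v : Fin n, (if v ∈ S then a else b) = a ^ S.card * b ^ (n - S.card) := by
  rw [Finset.prod_ite, Finset.prod_const, Finset.prod_const]
  congr 1
  · congr 1
    simp [Finset.filter_mem_eq_inter]
  · congr 1
    have := Finset.card_filter_add_card_filter_not (s := (univ : Finset (Fin n)))
      (p := fun v => v ∈ S)
    have hc : (univ.filter (fun v => v ∈ S)).card = S.card := by
      congr 1; simp [Finset.filter_mem_eq_inter]
    simp only [Finset.card_univ, Fintype.card_fin] at this
    omega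

lemma geo_measD (hmeas : ∀ v, Measurable (X v))
    (hindep : iIndepFun X μ)
    (hgeom : ∀ (v : Fin n) (j : ℕ), μ {ω | X v ω = j} = (2 : ℝ≥0∞)⁻¹ ^ (j + 1))
    (j : ℕ) (S : Finset (Fin n)) :
    μ (geoD X j S) = ((2:ℝ≥0∞)⁻¹^(j+1))^S.card * (1 - 2⁻¹^j)^(n - S.card) := by
  rw [geoD, geo_prod μ X hindep]
  have h : ∀ v : Fin n, μ (X v ⁻¹' (if v ∈ S then ({j} : Set ℕ) else Set.Iio j))
      = if v ∈ S then (2:ℝ≥0∞)⁻¹^(j+1) else (1 - 2⁻¹^j) := by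
    intro v; by_cases hv : v ∈ S
    · rw [if_pos hv, if_pos hv, show X v ⁻¹' {j} = {ω | X v ω = j} by ext; simp]
      exact hgeom v j
    · rw [if_neg hv, if_neg hv, show X v ⁻¹' Set.Iio j = {ω | X v ω < j} by ext; simp]
      exact geo_lt μ X hmeas hgeom v j
  rw [Finset.prod_congr rfl (fun v _ => h v), ite_prod]

lemma geo_measG (hmeas : ∀ v, Measurable (X v))
    (hindep : iIndepFun X μ)
    (hgeom : ∀ (v : Fin n) (j : ℕ), μ {ω | X v ω = j} = (2 : ℝ≥0∞)⁻¹ ^ (j + 1))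
    (j : ℕ) (S : Finset (Fin n)) :
    μ (geoG X j S) = ((2:ℝ≥0∞)⁻¹^(j+1))^S.card * (1 - 2⁻¹^j)^(n - S.card) := by
  rw [geoG, geo_prod μ X hindep]
  have h : ∀ v : Fin n, μ (X v ⁻¹' (if v ∈ S then (Set.Ici (j+1)) else Set.Iio j))
      = if v ∈ S then (2:ℝ≥0∞)⁻¹^(j+1) else (1 - 2⁻¹^j) := by
    intro v; by_cases hv : v ∈ S
    · rw [if_pos hv, if_pos hv, show X v ⁻¹' Set.Ici (j+1) = {ω | j+1 ≤ X v ω} by ext; simp]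
      exact geo_tail μ X hmeas hgeom v (j+1)
    · rw [if_neg hv, if_neg hv, show X v ⁻¹' Set.Iio j = {ω | X v ω < j} by ext; simp]
      exact geo_lt μ X hmeas hgeom v j
  rw [Finset.prod_congr rfl (fun v _ => h v), ite_prod]

lemma geo_measH (hmeas : ∀ v, Measurable (X v))
    (hindep : iIndepFun X μ)
    (hgeom : ∀ (v : Fin n) (j : ℕ), μ {ω | X v ω = j} = (2 : ℝ≥0∞)⁻¹ ^ (j + 1))
    (j : ℕ) (S : Finset (Fin n)) :
    μ (geoH X j S) = ((2:ℝ≥0∞)⁻¹^j)^S.card * (1 - 2⁻¹^j)^(n - S.card) := by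
  rw [geoH, geo_prod μ X hindep]
  have h : ∀ v : Fin n, μ (X v ⁻¹' (if v ∈ S then (Set.Ici j) else Set.Iio j))
      = if v ∈ S then (2:ℝ≥0∞)⁻¹^j else (1 - 2⁻¹^j) := by
    intro v; by_cases hv : v ∈ S
    · rw [if_pos hv, if_pos hv, show X v ⁻¹' Set.Ici j = {ω | j ≤ X v ω} by ext; simp]
      exact geo_tail μ X hmeas hgeom v j
    · rw [if_neg hv, if_neg hv, show X v ⁻¹' Set.Iio j = {ω | X v ω < j} by ext; simp]
      exact geo_lt μ X hmeas hgeom v j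
  rw [Finset.prod_congr rfl (fun v _ => h v), ite_prod]

lemma geo_measF (hmeas : ∀ v, Measurable (X v))
    (hindep : iIndepFun X μ)
    (hgeom : ∀ (v : Fin n) (j : ℕ), μ {ω | X v ω = j} = (2 : ℝ≥0∞)⁻¹ ^ (j + 1))
    (j : ℕ) (S : Finset (Fin n)) :
    μ (geoF X j S) = ((2:ℝ≥0∞)^S.card - 1) * μ (geoD X j S) := by
  have hGm : MeasurableSet (geoG X j S) :=
    MeasurableSet.iInter fun v => (hmeas v) .of_discrete
  have hsub : geoG X j S ⊆ geoH X j S := by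
    intro ω hω
    rw [mem_geoG] at hω
    exact (mem_geoH X).2 ⟨fun v hv => le_trans (by omega) (hω.1 v hv), hω.2⟩
  have hdiff : μ (geoF X j S) = μ (geoH X j S) - μ (geoG X j S) :=
    measure_diff hsub hGm.nullMeasurableSet (measure_ne_top μ _)
  have hg : μ (geoG X j S) ≠ ∞ := measure_ne_top μ _
  have hHG : μ (geoH X j S) = 2 ^ S.card * μ (geoG X j S) := by
    rw [geo_measH μ X hmeas hindep hgeom, geo_measG μ X hmeas hindep hgeom]
    have hkey : (2:ℝ≥0∞)⁻¹^j = 2 * 2⁻¹^(j+1) := by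
      rw [pow_succ', ← mul_assoc, ENNReal.mul_inv_cancel two_ne_zero ENNReal.ofNat_ne_top,
        one_mul]
    rw [hkey, mul_pow, mul_assoc]
  have h1le : (1:ℝ≥0∞) ≤ 2 ^ S.card := one_le_pow_of_one_le' one_le_two _
  rw [hdiff, hHG, geo_measG μ X hmeas hindep hgeom, ← geo_measD μ X hmeas hindep hgeom (j := j)]
  rw [show (2:ℝ≥0∞)^S.card = (2^S.card - 1) + 1 from (tsub_add_cancel_of_le h1le).symm,
    add_mul, one_mul]
  rw [geo_measD μ X hmeas hindep hgeom, ← geo_measG μ X hmeas hindep hgeom (j := j),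
    ENNReal.add_sub_cancel_right hg]
  congr 1
  rw [ENNReal.add_sub_cancel_right ENNReal.one_ne_top]

end GeoMeas

theorem geometric_exact_max_count_bound
    {Ω : Type*} [MeasurableSpace Ω] (μ : Measure Ω) [IsProbabilityMeasure μ]
    (n : ℕ) (hn : 2 ≤ n)
    (X : Fin n → Ω → ℕ)
    (hmeas : ∀ v, Measurable (X v))
    (hindep : iIndepFun X μ)
    (hgeom : ∀ (v : Fin n) (j : ℕ), μ {ω | X v ω = j} = (2 : ℝ≥0∞)⁻¹ ^ (j + 1))
    (i : ℕ) (hi2 : 2 ≤ i) (hin : i ≤ n) :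
    (μ {ω | (univ.filter fun v => X v ω = univ.sup fun u => X u ω).card = i}).toReal ≤
      (2 : ℝ) ^ ((1 : ℤ) - (i : ℤ)) := by
  classical
  set P : ℕ × Finset (Fin n) → Set Ω :=
    fun p => if p.2.card = i then geoD X p.1 p.2 else ∅ with hP
  set Q : ℕ × Finset (Fin n) → Set Ω :=
    fun p => if p.2.card = i then geoF X p.1 p.2 else ∅ with hQ
  have hPmeas : ∀ p, MeasurableSet (P p) := by
    intro p; rw [hP]; dsimp only
    split
    · exact MeasurableSet.iInter fun v => (hmeas v) .of_discrete
    · exact MeasurableSet.empty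
  have hQmeas : ∀ p, MeasurableSet (Q p) := by
    intro p; rw [hQ]; dsimp only
    split
    · exact MeasurableSet.diff
        (MeasurableSet.iInter fun v => (hmeas v) .of_discrete)
        (MeasurableSet.iInter fun v => (hmeas v) .of_discrete)
    · exact MeasurableSet.empty
  -- target decomposition
  have hEU : {ω | (univ.filter fun v => X v ω = univ.sup fun u => X u ω).card = i}
      = ⋃ p, P p := by
    ext ω
    simp only [Set.mem_setOf_eq, Set.mem_iUnion]
    constructor
    · intro hcard
      refine ⟨(univ.sup fun u => X u ω, univ.filter fun v => X v ω = univ.sup fun u => X u ω),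
        ?_⟩
      rw [hP]; dsimp only; rw [if_pos hcard, mem_geoD]
      refine ⟨fun v hv => (mem_filter.1 hv).2, fun v hv => ?_⟩
      exact lt_of_le_of_ne (Finset.le_sup (f := fun u => X u ω) (mem_univ v))
        fun h => hv (mem_filter.2 ⟨mem_univ v, h⟩)
    · rintro ⟨⟨j, S⟩, hp⟩
      rw [hP] at hp; dsimp only at hp
      by_cases hc : S.card = i
      · rw [if_pos hc, mem_geoD] at hp
        obtain ⟨h1, h2⟩ := hp
        have hS0 : S.Nonempty := card_pos.1 (by omega)
        obtain ⟨v0, hv0⟩ := hS0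
        have hsup : (univ.sup fun u => X u ω) = j := by
          refine le_antisymm (Finset.sup_le fun v _ => ?_) ?_
          · by_cases hv : v ∈ S
            · exact (h1 v hv).le
            · exact (h2 v hv).le
          · rw [← h1 v0 hv0]; exact Finset.le_sup (f := fun u => X u ω) (mem_univ v0)
        have hfil : univ.filter (fun v => X v ω = univ.sup fun u => X u ω) = S := by
          ext v
          simp only [mem_filter, mem_univ, true_and, hsup]
          constructor
          · intro hxv
            by_contra hv
            exact absurd hxv (h2 v hv).ne
          · exact h1 v
        rw [hfil]; exact hc
      · rw [if_neg hc] at hp; exact absurd hp (Set.notMem_empty ω)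
  have hPdisj : Pairwise (Function.onFun Disjoint P) := by
    intro p q hne
    rw [Function.onFun, hP]; dsimp only
    split
    · split
      · rename_i hcS hcT
        rw [Set.disjoint_left]
        intro ω hp hq
        obtain ⟨hjk, hST⟩ := geoD_eq_of_mem X (by omega) (by omega) hp hq
        exact hne (Prod.ext hjk hST)
      · exact Set.disjoint_empty _
    · exact Set.empty_disjoint _
  have hQdisj : Pairwise (Function.onFun Disjoint Q) := by
    intro p q hne
    rw [Function.onFun, hQ]; dsimp only
    split
    · split
      · rename_i hcS hcT
        rw [Set.disjoint_left]
        intro ω hp hq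
        rcases lt_trichotomy p.1 q.1 with h | h | h
        · exact geoF_disj_lt X h hcS hcT hp hq
        · exact hne (Prod.ext h (geoF_eq_of_mem X (h ▸ hp) hq))
        · exact geoF_disj_lt X h hcT hcS hq hp
      · exact Set.disjoint_empty _
    · exact Set.empty_disjoint _
  have hQP : ∀ p, μ (Q p) = ((2:ℝ≥0∞) ^ i - 1) * μ (P p) := by
    intro p
    rw [hP, hQ]; dsimp only
    by_cases hc : p.2.card = i
    · rw [if_pos hc, if_pos hc, geo_measF μ X hmeas hindep hgeom, hc]
    · rw [if_neg hc, if_neg hc, measure_empty, mul_zero]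
  have hsum1 : μ {ω | (univ.filter fun v => X v ω = univ.sup fun u => X u ω).card = i}
      = ∑' p, μ (P p) := by
    rw [hEU, measure_iUnion hPdisj hPmeas]
  have hsum2 : ∑' p, μ (Q p) ≤ 1 := by
    rw [← measure_iUnion hQdisj hQmeas]
    exact prob_le_one
  have hkey : ((2:ℝ≥0∞) ^ i - 1) *
      μ {ω | (univ.filter fun v => X v ω = univ.sup fun u => X u ω).card = i} ≤ 1 := by
    rw [hsum1, ← ENNReal.tsum_mul_left]
    calc ∑' p, ((2:ℝ≥0∞) ^ i - 1) * μ (P p) = ∑' p, μ (Q p) :=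
          tsum_congr fun p => (hQP p).symm
      _ ≤ 1 := hsum2
  have h2i : (2:ℝ≥0∞) ≤ 2 ^ i := le_self_pow₀ one_le_two (by omega)
  have h1lt : (1:ℝ≥0∞) < 2 ^ i := lt_of_lt_of_le ENNReal.one_lt_two h2i
  have hEle : μ {ω | (univ.filter fun v => X v ω = univ.sup fun u => X u ω).card = i}
      ≤ ((2:ℝ≥0∞) ^ i - 1)⁻¹ := by
    rw [ENNReal.le_inv_iff_mul_le]
    rwa [mul_comm]
  have hne0 : (2:ℝ≥0∞) ^ i - 1 ≠ 0 := by
    simp only [ne_eq, tsub_eq_zero_iff_le, not_le]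
    exact h1lt
  have hnetop : ((2:ℝ≥0∞) ^ i - 1)⁻¹ ≠ ∞ := by
    rw [ENNReal.inv_ne_top]
    exact hne0
  have hmono := ENNReal.toReal_mono hnetop hEle
  refine le_trans hmono ?_
  have htr : (((2:ℝ≥0∞) ^ i - 1)⁻¹).toReal = ((2:ℝ) ^ i - 1)⁻¹ := by
    rw [ENNReal.toReal_inv, ENNReal.toReal_sub_of_le h1lt.le (by simp [ENNReal.pow_ne_top])]
    simp [ENNReal.toReal_pow]
  rw [htr]
  have h4 : (4:ℝ) ≤ 2 ^ i := by
    calc (4:ℝ) = 2 ^ 2 := by norm_num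
      _ ≤ 2 ^ i := pow_le_pow_right₀ one_le_two hi2
  have hz : (2:ℝ) ^ ((1:ℤ) - (i:ℤ)) = 2 / 2 ^ i := by
    rw [zpow_sub₀ (two_ne_zero), zpow_one, zpow_natCast]
  rw [hz, inv_eq_one_div, div_le_div_iff₀ (by linarith) (by positivity)]
  linarith
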